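/- arXiv:2302.12218 — 5 statements merged into one kernel-verified Lean document; each statement's English description precedes it below -/
import Mathlib

section
/- For a function F defined on (1,∞), with G(x) = log x · ∑_{n≤x} F(x/n), we have F(x)·log x + ∑_{n≤x} F(x/n)·Λ(n) = ∑_{d≤x} μ(d)·G(x/d), where Λ is the von Mangoldt function and μ is the Möbius function. -/
open Finset ArithmeticFunction

lemma moebius_log_div_sum (x : ℝ) (hx : 0 < x) {n : ℕ} (hn : n ≠ 0) :
    ∑ d ∈ n.divisors, (moebius d : ℝ) * Real.log (x / d)
      = (if n = 1 then Real.log x else 0) + Λ n := by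
  have h1 : ∑ d ∈ n.divisors, (moebius d : ℝ) * Real.log (x / d)
      = ∑ d ∈ n.divisors, ((moebius d : ℝ) * Real.log x - (moebius d : ℝ) * Real.log d) := by
    apply Finset.sum_congr rfl
    intro d hd
    have hd0 : d ≠ 0 := (Nat.pos_of_mem_divisors hd).ne'
    rw [Real.log_div hx.ne' (by exact_mod_cast hd0), mul_sub]
  rw [h1, Finset.sum_sub_distrib,
    show (∑ d ∈ n.divisors, (moebius d : ℝ) * Real.log d) = -Λ n from
      ArithmeticFunction.sum_moebius_mul_log_eq,
    sub_neg_eq_add, ← Finset.sum_mul]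
  congr 1
  have h2 : ∑ d ∈ n.divisors, (moebius d : ℝ) = ((moebius * zeta : ArithmeticFunction ℤ) n : ℝ) := by
    rw [ArithmeticFunction.coe_mul_zeta_apply]
    push_cast
    rfl
  rw [h2, ArithmeticFunction.moebius_mul_coe_zeta]
  simp [ArithmeticFunction.one_apply]


lemma swap_sum (N : ℕ) (f : ℕ → ℕ → ℝ) :
    ∑ d ∈ Finset.Icc 1 N, ∑ m ∈ Finset.Icc 1 (N / d), f d (d * m)
      = ∑ n ∈ Finset.Icc 1 N, ∑ d ∈ n.divisors, f d n := by
  rw [Finset.sum_sigma', Finset.sum_sigma']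
  apply Finset.sum_nbij' (i := fun p => ⟨p.1 * p.2, p.1⟩) (j := fun p => ⟨p.2, p.1 / p.2⟩)
  · rintro ⟨d, m⟩ hp
    simp only [Finset.mem_sigma, Finset.mem_Icc] at hp ⊢
    obtain ⟨⟨hd1, hdN⟩, hm1, hmN⟩ := hp
    have hd0 : 0 < d := hd1
    have hdm : d * m ≤ N := by
      have := (Nat.le_div_iff_mul_le hd0).mp hmN
      rwa [mul_comm] at this
    refine ⟨⟨Nat.one_le_iff_ne_zero.mpr (by positivity), hdm⟩, ?_⟩
    exact Nat.mem_divisors.mpr ⟨⟨m, rfl⟩, by positivity⟩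
  · rintro ⟨n, d⟩ hp
    simp only [Finset.mem_sigma, Finset.mem_Icc, Nat.mem_divisors] at hp ⊢
    obtain ⟨⟨hn1, hnN⟩, hdn, hn0⟩ := hp
    have hd0 : 0 < d := Nat.pos_of_dvd_of_pos hdn (by omega)
    refine ⟨⟨hd0, le_trans (Nat.le_of_dvd (by omega) hdn) hnN⟩,
      Nat.one_le_iff_ne_zero.mpr ?_, ?_⟩
    · intro h
      rw [Nat.div_eq_zero_iff] at h
      exact absurd (Nat.le_of_dvd (by omega) hdn) (by omega)
    · exact Nat.div_le_div_right hnN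
  · rintro ⟨d, m⟩ hp
    simp only [Finset.mem_sigma, Finset.mem_Icc] at hp
    obtain ⟨⟨hd1, _⟩, _, _⟩ := hp
    simp [Nat.mul_div_cancel_left _ (by omega : 0 < d)]
  · rintro ⟨n, d⟩ hp
    simp only [Finset.mem_sigma, Finset.mem_Icc, Nat.mem_divisors] at hp
    obtain ⟨⟨hn1, _⟩, hdn, _⟩ := hp
    simp [Nat.mul_div_cancel' hdn]
  · rintro ⟨d, m⟩ hp
    rfl

theorem tatuzawa_iseki (F : ℝ → ℝ)
    (G : ℝ → ℝ)
    (hG : ∀ x, G x = Real.log x * ∑ n ∈ Finset.Icc 1 ⌊x⌋₊, F (x / n)) :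
    ∀ x : ℝ, 1 ≤ x →
      F x * Real.log x + ∑ n ∈ Finset.Icc 1 ⌊x⌋₊, F (x / n) * Λ n
        = ∑ d ∈ Finset.Icc 1 ⌊x⌋₊, (moebius d : ℝ) * G (x / d) := by
  intro x hx
  have hx0 : (0:ℝ) < x := lt_of_lt_of_le one_pos hx
  set N := ⌊x⌋₊ with hN
  have hN1 : 1 ≤ N := (Nat.one_le_floor_iff x).mpr hx
  set f : ℕ → ℕ → ℝ := fun d n => (moebius d : ℝ) * Real.log (x / d) * F (x / n) with hf
  have key : ∑ d ∈ Finset.Icc 1 N, (moebius d : ℝ) * G (x / d)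
      = ∑ n ∈ Finset.Icc 1 N, (∑ d ∈ n.divisors, (moebius d : ℝ) * Real.log (x / d)) * F (x / n) := by
    have step1 : ∀ d ∈ Finset.Icc 1 N, (moebius d : ℝ) * G (x / d)
        = ∑ m ∈ Finset.Icc 1 (N / d), f d (d * m) := by
      intro d hd
      rw [hG, Nat.floor_div_natCast, Finset.mul_sum, Finset.mul_sum]
      apply Finset.sum_congr rfl
      intro m hm
      rw [hf]
      simp only
      rw [div_div, Nat.cast_mul]
      ring
    rw [Finset.sum_congr rfl step1, swap_sum]
    apply Finset.sum_congr rfl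
    intro n hn
    rw [Finset.sum_mul]
  rw [key]
  have step2 : ∀ n ∈ Finset.Icc 1 N,
      (∑ d ∈ n.divisors, (moebius d : ℝ) * Real.log (x / d)) * F (x / n)
        = ((if n = 1 then Real.log x else 0) + Λ n) * F (x / n) := by
    intro n hn
    rw [moebius_log_div_sum x hx0 (by simp at hn; omega)]
  rw [Finset.sum_congr rfl step2]
  simp only [add_mul, ite_mul, zero_mul]
  rw [Finset.sum_add_distrib]
  congr 1
  · rw [Finset.sum_ite_eq' (Finset.Icc 1 N) 1 (fun n => Real.log x * F (x / (n : ℕ)))]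
    simp [Finset.mem_Icc, hN1, mul_comm]
  · apply Finset.sum_congr rfl
    intro n hn
    ring
end

section
/- Define Λ₂ := μ * (log)², i.e., Λ₂(n) = ∑_{d|n} μ(d)·(log(n/d))². Then Λ₂ = Λ*Λ + Λ·log, i.e., Λ₂(n) = ∑_{d|n} Λ(d)Λ(n/d) + Λ(n)·log n for all n ≥ 1. -/
open Finset ArithmeticFunction ArithmeticFunction.Moebius

theorem lambda2_eq (n : ℕ) (hn : 1 ≤ n) :
    ∑ d ∈ n.divisors, (μ d : ℝ) * (Real.log ((n : ℝ) / d))^2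
      = (∑ d ∈ n.divisors, Λ d * Λ (n / d)) + Λ n * Real.log n := by
  have key : ∀ m : ℕ, 0 < m → ∑ i ∈ m.divisors,
      ((∑ d ∈ i.divisors, Λ d * Λ (i / d)) + Λ i * Real.log i)
      = (Real.log m)^2 := by
    intro m hm
    rw [Finset.sum_add_distrib]
    have h1 : ∀ i ∈ m.divisors, ∑ d ∈ i.divisors, Λ d * Λ (i / d) = (Λ * Λ) i := by
      intro i _
      rw [mul_apply, Nat.sum_divisorsAntidiagonal (Λ · * Λ ·)]
    rw [Finset.sum_congr rfl h1, ← coe_mul_zeta_apply, mul_assoc, vonMangoldt_mul_zeta,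
      mul_apply, Nat.sum_divisorsAntidiagonal (fun a b => Λ a * ArithmeticFunction.log b)]
    have h2 : ∑ i ∈ m.divisors, Λ i * ArithmeticFunction.log (m / i)
        + ∑ i ∈ m.divisors, Λ i * Real.log i
        = ∑ i ∈ m.divisors, Λ i * Real.log m := by
      rw [← Finset.sum_add_distrib]
      refine Finset.sum_congr rfl fun i hi => ?_
      rw [← mul_add, log_apply]
      congr 1
      obtain ⟨hdvd, hm0⟩ := Nat.mem_divisors.mp hi
      have hi0 : i ≠ 0 := fun h => hm0 (by simpa [h] using hdvd)
      have hmi0 : (m / i : ℕ) ≠ 0 := Nat.div_ne_zero_iff.mpr ⟨hi0, Nat.le_of_dvd hm hdvd⟩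
      rw [← Real.log_mul (Nat.cast_ne_zero.2 hmi0) (Nat.cast_ne_zero.2 hi0), ← Nat.cast_mul,
        Nat.div_mul_cancel hdvd]
    rw [h2, ← Finset.sum_mul, vonMangoldt_sum, sq]
  have inv := (sum_eq_iff_sum_mul_moebius_eq
    (f := fun i => (∑ d ∈ i.divisors, Λ d * Λ (i / d)) + Λ i * Real.log i)
    (g := fun m => (Real.log m)^2)).mp key n hn
  rw [← inv, Nat.sum_divisorsAntidiagonal (fun a b => (μ a : ℝ) * (Real.log b)^2)]
  refine Finset.sum_congr rfl fun d hd => ?_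
  obtain ⟨hdvd, hn0⟩ := Nat.mem_divisors.mp hd
  have hd0 : d ≠ 0 := fun h => hn0 (by simpa [h] using hdvd)
  rw [Nat.cast_div hdvd (Nat.cast_ne_zero.2 hd0)]
end

section
/- Let F(x) := ∑_{n≤x} μ(n)·log(x/n). Then F(x)·log x + ∑_{n≤x} F(x/n)·Λ(n) = O(x) as x → ∞. -/
open Finset ArithmeticFunction Filter Asymptotics
open scoped ArithmeticFunction.Moebius ArithmeticFunction.zeta

lemma aux_sqrt_sum (N : ℕ) : ∑ k ∈ Finset.Icc 1 N, (1:ℝ)/Real.sqrt k ≤ 2 * Real.sqrt N := by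
  induction N with
  | zero => simp
  | succ n ih =>
    rw [Finset.sum_Icc_succ_top (by norm_num)]
    have h1 : Real.sqrt n * Real.sqrt (n+1) ≤ n + 1/2 := by
      rw [← Real.sqrt_mul (by positivity)]
      have : Real.sqrt ((n:ℝ) * (n+1)) ≤ Real.sqrt ((n+1/2)^2) := by
        apply Real.sqrt_le_sqrt; nlinarith
      rwa [Real.sqrt_sq (by positivity)] at this
    have h2 : (0:ℝ) < Real.sqrt (n+1) := Real.sqrt_pos.mpr (by positivity)
    have h3 : Real.sqrt (n+1) ^ 2 = (n:ℝ)+1 := Real.sq_sqrt (by positivity)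
    have key : 1 / Real.sqrt (n+1) ≤ 2 * Real.sqrt (n+1) - 2 * Real.sqrt n := by
      rw [div_le_iff₀ h2]
      nlinarith
    push_cast
    linarith

lemma aux_log_sq_le {t : ℝ} (ht : 1 ≤ t) : Real.log t ^ 2 ≤ 16 * Real.sqrt t := by
  have h0 : (0:ℝ) < t := lt_of_lt_of_le one_pos ht
  have h1 : Real.log t ≤ 4 * t ^ ((4:ℝ)⁻¹) := by
    have := Real.log_le_rpow_div h0.le (by norm_num : (0:ℝ) < 4⁻¹)
    calc Real.log t ≤ t ^ ((4:ℝ)⁻¹) / 4⁻¹ := this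
      _ = 4 * t ^ ((4:ℝ)⁻¹) := by ring
  have h2 : (0:ℝ) ≤ Real.log t := Real.log_nonneg ht
  have h3 : Real.log t ^ 2 ≤ (4 * t ^ ((4:ℝ)⁻¹)) ^ 2 := by
    apply pow_le_pow_left₀ h2 h1
  have h4 : (t ^ ((4:ℝ)⁻¹)) ^ 2 = Real.sqrt t := by
    rw [← Real.rpow_natCast (t ^ ((4:ℝ)⁻¹)) 2, ← Real.rpow_mul h0.le,
      Real.sqrt_eq_rpow]
    norm_num
  calc Real.log t ^ 2 ≤ (4 * t ^ ((4:ℝ)⁻¹)) ^ 2 := h3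
    _ = 16 * Real.sqrt t := by rw [mul_pow, h4]; norm_num

lemma aux_mu_Lam (k : ℕ) :
    ∑ p ∈ k.divisorsAntidiagonal, Λ p.1 * (μ p.2 : ℝ) = -((μ k : ℝ) * Real.log k) := by
  have hgz : (ArithmeticFunction.pmul (μ : ArithmeticFunction ℝ) ArithmeticFunction.log) * ζ
      = -Λ := by
    ext n
    rw [coe_mul_zeta_apply]
    show _ = -(Λ n)
    simp only [pmul_apply, intCoe_apply, log_apply]
    exact sum_moebius_mul_log_eq
  have hg : (Λ * (μ : ArithmeticFunction ℝ))
      = -(ArithmeticFunction.pmul (μ : ArithmeticFunction ℝ) ArithmeticFunction.log) := by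
    have := congrArg (· * (μ : ArithmeticFunction ℝ)) hgz
    simp only [mul_assoc, coe_zeta_mul_coe_moebius, mul_one] at this
    rw [this, neg_mul, neg_neg]
  have h2 := congrArg (fun f : ArithmeticFunction ℝ => f k) hg
  simp only [mul_apply, pmul_apply, intCoe_apply, log_apply] at h2
  rw [h2]
  show -((μ k : ℝ) * Real.log k) = _
  rfl

lemma aux_sum_switch (N : ℕ) (f : ℕ → ℕ → ℝ) :
    ∑ n ∈ Finset.Icc 1 N, ∑ m ∈ Finset.Icc 1 (N / n), f n m
      = ∑ k ∈ Finset.Icc 1 N, ∑ p ∈ k.divisorsAntidiagonal, f p.1 p.2 := by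
  rw [Finset.sum_sigma' (Finset.Icc 1 N) (fun n => Finset.Icc 1 (N / n)) f,
    Finset.sum_sigma' (Finset.Icc 1 N) (fun k => k.divisorsAntidiagonal)
      (fun _ p => f p.1 p.2)]
  refine Finset.sum_bij' (fun p _ => ⟨p.1 * p.2, (p.1, p.2)⟩)
    (fun q _ => ⟨q.2.1, q.2.2⟩) ?_ ?_ ?_ ?_ ?_
  · rintro ⟨n, m⟩ hp
    simp only [Finset.mem_sigma, Finset.mem_Icc, Nat.mem_divisorsAntidiagonal] at hp ⊢
    obtain ⟨⟨hn1, hnN⟩, hm1, hmN⟩ := hp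
    have hn0 : n ≠ 0 := by omega
    have hm0 : m ≠ 0 := by omega
    have hmul : n * m ≤ N := by
      rw [Nat.le_div_iff_mul_le (by omega : 0 < n)] at hmN
      calc n * m = m * n := Nat.mul_comm n m
        _ ≤ N := hmN
    exact ⟨⟨Nat.one_le_iff_ne_zero.mpr (Nat.mul_ne_zero hn0 hm0), hmul⟩, trivial,
      Nat.mul_ne_zero hn0 hm0⟩
  · rintro ⟨k, n, m⟩ hq
    simp only [Finset.mem_sigma, Finset.mem_Icc, Nat.mem_divisorsAntidiagonal] at hq ⊢
    obtain ⟨⟨hk1, hkN⟩, hnm, hk0⟩ := hq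
    have hn0 : n ≠ 0 := by rintro rfl; simp at hnm; exact hk0 hnm.symm
    have hm0 : m ≠ 0 := by rintro rfl; simp at hnm; exact hk0 hnm.symm
    refine ⟨⟨Nat.one_le_iff_ne_zero.mpr hn0, ?_⟩, Nat.one_le_iff_ne_zero.mpr hm0, ?_⟩
    · calc n ≤ n * m := Nat.le_mul_of_pos_right n (Nat.pos_of_ne_zero hm0)
        _ = k := hnm
        _ ≤ N := hkN
    · rw [Nat.le_div_iff_mul_le (Nat.pos_of_ne_zero hn0), Nat.mul_comm, hnm]; exact hkN
  · rintro ⟨n, m⟩ _; rfl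
  · rintro ⟨k, n, m⟩ hq
    simp only [Finset.mem_sigma, Nat.mem_divisorsAntidiagonal] at hq
    obtain ⟨_, hnm, _⟩ := hq
    simp [hnm]
  · rintro ⟨n, m⟩ _; rfl

lemma aux_key_identity (F : ℝ → ℝ)
    (hF : ∀ x, F x = ∑ n ∈ Finset.Icc 1 ⌊x⌋₊, (μ n : ℝ) * Real.log (x / n))
    (x : ℝ) (hx : 1 ≤ x) :
    F x * Real.log x + ∑ n ∈ Finset.Icc 1 ⌊x⌋₊, F (x / n) * Λ n
      = ∑ k ∈ Finset.Icc 1 ⌊x⌋₊, (μ k : ℝ) * Real.log (x / k) ^ 2 := by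
  have hx0 : (0:ℝ) < x := lt_of_lt_of_le one_pos hx
  set N := ⌊x⌋₊ with hN
  have h2 : ∑ n ∈ Finset.Icc 1 N, F (x / n) * Λ n
      = ∑ n ∈ Finset.Icc 1 N, ∑ m ∈ Finset.Icc 1 (N / n),
          ((μ m : ℝ) * Real.log (x / (n * m : ℕ)) * Λ n) := by
    refine Finset.sum_congr rfl fun n hn => ?_
    rw [Finset.mem_Icc] at hn
    rw [hF (x / n), Nat.floor_div_natCast x n, Finset.sum_mul]
    refine Finset.sum_congr rfl fun m hm => ?_
    rw [Finset.mem_Icc] at hm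
    congr 2
    push_cast
    rw [div_div]
  rw [h2, aux_sum_switch N (fun n m => (μ m : ℝ) * Real.log (x / (n * m : ℕ)) * Λ n)]
  have h3 : ∀ k ∈ Finset.Icc 1 N,
      (∑ p ∈ k.divisorsAntidiagonal, (μ p.2 : ℝ) * Real.log (x / (p.1 * p.2 : ℕ)) * Λ p.1)
        = -((μ k : ℝ) * Real.log k) * Real.log (x / k) := by
    intro k hk
    rw [← aux_mu_Lam k, Finset.sum_mul]
    refine Finset.sum_congr rfl fun p hp => ?_
    rw [Nat.mem_divisorsAntidiagonal] at hp
    rw [hp.1]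
    ring
  rw [Finset.sum_congr rfl h3, hF x, Finset.sum_mul, ← Finset.sum_add_distrib]
  refine Finset.sum_congr rfl fun k hk => ?_
  rw [Finset.mem_Icc] at hk
  have hk0 : (0:ℝ) < (k:ℝ) := by exact_mod_cast hk.1
  have hlog : Real.log (x / k) = Real.log x - Real.log k :=
    Real.log_div hx0.ne' hk0.ne'
  rw [hlog]
  ring

lemma aux_mu_abs_le (k : ℕ) : |(μ k : ℝ)| ≤ 1 := by
  rcases ArithmeticFunction.moebius_eq_or k with h | h | h <;> simp [h]

lemma aux_final_bound (x : ℝ) (hx : 1 ≤ x) :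
    |∑ k ∈ Finset.Icc 1 ⌊x⌋₊, (μ k : ℝ) * Real.log (x / k) ^ 2| ≤ 32 * x := by
  have hx0 : (0:ℝ) < x := lt_of_lt_of_le one_pos hx
  set N := ⌊x⌋₊ with hN
  have step1 : ∀ k ∈ Finset.Icc 1 N,
      |(μ k : ℝ) * Real.log (x / k) ^ 2| ≤ 16 * Real.sqrt x * (1 / Real.sqrt k) := by
    intro k hk
    rw [Finset.mem_Icc] at hk
    have hk0 : (0:ℝ) < (k:ℝ) := by exact_mod_cast hk.1
    have hkx : (k:ℝ) ≤ x := le_trans (by exact_mod_cast hk.2) (Nat.floor_le hx0.le)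
    have h1 : (1:ℝ) ≤ x / k := (one_le_div hk0).mpr hkx
    have h2 : Real.log (x / k) ^ 2 ≤ 16 * Real.sqrt (x / k) := aux_log_sq_le h1
    have h3 : Real.sqrt (x / k) = Real.sqrt x / Real.sqrt k := Real.sqrt_div hx0.le k
    calc |(μ k : ℝ) * Real.log (x / k) ^ 2|
        = |(μ k : ℝ)| * |Real.log (x / k) ^ 2| := abs_mul _ _
      _ ≤ 1 * |Real.log (x / k) ^ 2| := by
          apply mul_le_mul_of_nonneg_right (aux_mu_abs_le k) (abs_nonneg _)
      _ = Real.log (x / k) ^ 2 := by rw [one_mul, abs_of_nonneg (sq_nonneg _)]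
      _ ≤ 16 * Real.sqrt (x / k) := h2
      _ = 16 * Real.sqrt x * (1 / Real.sqrt k) := by rw [h3]; ring
  calc |∑ k ∈ Finset.Icc 1 N, (μ k : ℝ) * Real.log (x / k) ^ 2|
      ≤ ∑ k ∈ Finset.Icc 1 N, |(μ k : ℝ) * Real.log (x / k) ^ 2| :=
        Finset.abs_sum_le_sum_abs _ _
    _ ≤ ∑ k ∈ Finset.Icc 1 N, 16 * Real.sqrt x * (1 / Real.sqrt k) :=
        Finset.sum_le_sum step1
    _ = 16 * Real.sqrt x * ∑ k ∈ Finset.Icc 1 N, (1 / Real.sqrt k) := by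
        rw [Finset.mul_sum]
    _ ≤ 16 * Real.sqrt x * (2 * Real.sqrt N) := by
        apply mul_le_mul_of_nonneg_left (aux_sqrt_sum N) (by positivity)
    _ ≤ 16 * Real.sqrt x * (2 * Real.sqrt x) := by
        have : Real.sqrt N ≤ Real.sqrt x := Real.sqrt_le_sqrt (Nat.floor_le hx0.le)
        nlinarith [Real.sqrt_nonneg x, Real.sqrt_nonneg (N:ℝ)]
    _ = 32 * (Real.sqrt x * Real.sqrt x) := by ring
    _ = 32 * x := by rw [Real.mul_self_sqrt hx0.le]

theorem F_log_plus_conv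
    (F : ℝ → ℝ)
    (hF : ∀ x, F x = ∑ n ∈ Finset.Icc 1 ⌊x⌋₊, (ArithmeticFunction.moebius n : ℝ) * Real.log (x / n)) :
    (fun x : ℝ => F x * Real.log x + ∑ n ∈ Finset.Icc 1 ⌊x⌋₊, F (x / n) * Λ n)
      =O[atTop] (fun x : ℝ => x) := by
  rw [Asymptotics.isBigO_iff]
  refine ⟨32, ?_⟩
  filter_upwards [eventually_ge_atTop (1:ℝ)] with x hx
  rw [aux_key_identity F hF x hx]
  have := aux_final_bound x hx
  rwa [Real.norm_eq_abs, Real.norm_eq_abs, abs_of_nonneg (by linarith : (0:ℝ) ≤ x)]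
end

section
/- Let F(x) := ∑_{n≤x} μ(n)·log(x/n) and Λ₂⁻ := Λ*Λ − Λ·log. Then F(x)·(log x)² = ∑_{n≤x} Λ₂⁻(n)·F(x/n) + O(x·log x) as x → ∞. -/
open Finset ArithmeticFunction Filter Asymptotics
open scoped ArithmeticFunction.Moebius ArithmeticFunction.zeta

lemma pmul_log_mul' (f g : ArithmeticFunction ℝ) :
    ArithmeticFunction.log.pmul (f * g)
      = ArithmeticFunction.log.pmul f * g + f * ArithmeticFunction.log.pmul g := by
  ext n
  simp only [pmul_apply, mul_apply, ArithmeticFunction.add_apply, log_apply, Finset.mul_sum,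
    ← Finset.sum_add_distrib]
  refine Finset.sum_congr rfl fun p hp => ?_
  obtain ⟨hpn, hn⟩ := Nat.mem_divisorsAntidiagonal.mp hp
  have h1 : p.1 ≠ 0 := by rintro h; exact hn (by simp [← hpn, h])
  have h2 : p.2 ≠ 0 := by rintro h; exact hn (by simp [← hpn, h])
  rw [← hpn]
  push_cast
  rw [Real.log_mul (by exact_mod_cast h1) (by exact_mod_cast h2)]
  ring

lemma pmul_log_neg' (f : ArithmeticFunction ℝ) :
    ArithmeticFunction.log.pmul (-f) = -ArithmeticFunction.log.pmul f := by
  ext n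
  have h1 : (-f) n = -(f n) := rfl
  have h2 : (-ArithmeticFunction.log.pmul f) n = -(ArithmeticFunction.log.pmul f n) := rfl
  simp only [pmul_apply, h1, h2, log_apply]
  ring

lemma key_af' :
    (Λ * Λ - ArithmeticFunction.log.pmul Λ) * (μ : ArithmeticFunction ℝ)
      = ArithmeticFunction.log.pmul (ArithmeticFunction.log.pmul (μ : ArithmeticFunction ℝ)) := by
  have e1 : ArithmeticFunction.log * (μ : ArithmeticFunction ℝ) = Λ :=
    log_mul_moebius_eq_vonMangoldt
  have e2 : (ζ : ArithmeticFunction ℝ) * (μ : ArithmeticFunction ℝ) = 1 :=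
    coe_zeta_mul_coe_moebius
  have h1 : ArithmeticFunction.log.pmul (1 : ArithmeticFunction ℝ) = 0 := by
    ext n
    simp only [pmul_apply, one_apply, ArithmeticFunction.zero_apply, log_apply]
    rcases eq_or_ne n 1 with rfl | h
    · simp
    · simp [h]
  have hLζ : ArithmeticFunction.log.pmul (ζ : ArithmeticFunction ℝ) = ArithmeticFunction.log :=
    pmul_zeta _
  set A : ArithmeticFunction ℝ := ArithmeticFunction.log.pmul (μ : ArithmeticFunction ℝ) with hA
  set B : ArithmeticFunction ℝ := ArithmeticFunction.log.pmul A with hB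
  have e3 : Λ + (ζ : ArithmeticFunction ℝ) * A = 0 := by
    have h := pmul_log_mul' (ζ : ArithmeticFunction ℝ) (μ : ArithmeticFunction ℝ)
    rw [e2, h1, hLζ, e1, ← hA] at h
    rw [← h]
  have e4 : ArithmeticFunction.log.pmul Λ
      + ArithmeticFunction.log * A + (ζ : ArithmeticFunction ℝ) * B = 0 := by
    have hΛ : Λ = -((ζ : ArithmeticFunction ℝ) * A) :=
      eq_neg_of_add_eq_zero_left e3
    have h := pmul_log_mul' (ζ : ArithmeticFunction ℝ) A
    rw [hLζ, ← hB] at h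
    rw [hΛ, pmul_log_neg', h]
    ring
  linear_combination A * e1
    + (B - Λ * A) * e2 + (Λ * (μ : ArithmeticFunction ℝ)) * e3
    + (-(μ : ArithmeticFunction ℝ)) * e4


lemma sum_swap_div (N : ℕ) (g : ℕ → ℕ → ℝ) :
    ∑ n ∈ Finset.Icc 1 N, ∑ m ∈ Finset.Icc 1 (N / n), g n m
      = ∑ k ∈ Finset.Icc 1 N, ∑ p ∈ k.divisorsAntidiagonal, g p.1 p.2 := by
  rw [Finset.sum_sigma', Finset.sum_sigma']
  refine Finset.sum_nbij' (fun p => ⟨p.1 * p.2, p.1, p.2⟩) (fun p => ⟨p.2.1, p.2.2⟩)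
    ?_ ?_ ?_ ?_ ?_
  · rintro ⟨n, m⟩ h
    simp only [Finset.mem_sigma, Finset.mem_Icc] at h ⊢
    obtain ⟨⟨hn1, hnN⟩, hm1, hmN⟩ := h
    have hn0 : 0 < n := hn1
    have hmul : n * m ≤ N := by
      rw [Nat.le_div_iff_mul_le hn0] at hmN
      calc n * m = m * n := Nat.mul_comm n m
        _ ≤ N := hmN
    refine ⟨⟨Nat.one_le_iff_ne_zero.mpr (by positivity), hmul⟩, ?_⟩
    simp [Nat.mem_divisorsAntidiagonal]
    omega
  · rintro ⟨k, a, b⟩ h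
    simp only [Finset.mem_sigma, Finset.mem_Icc, Nat.mem_divisorsAntidiagonal] at h ⊢
    obtain ⟨⟨hk1, hkN⟩, hab, hk0⟩ := h
    have ha : 0 < a := Nat.pos_of_ne_zero fun h => hk0 (by rw [← hab, h, Nat.zero_mul])
    have hb : 0 < b := Nat.pos_of_ne_zero fun h => hk0 (by rw [← hab, h, Nat.mul_zero])
    refine ⟨⟨ha, le_trans (Nat.le_of_dvd (by omega) ⟨b, hab.symm⟩) hkN⟩, hb, ?_⟩
    rw [Nat.le_div_iff_mul_le ha, Nat.mul_comm, hab]; exact hkN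
  · rintro ⟨n, m⟩ h; rfl
  · rintro ⟨k, a, b⟩ h
    simp only [Finset.mem_sigma, Nat.mem_divisorsAntidiagonal] at h
    obtain ⟨-, hab, -⟩ := h
    simp [hab]
  · rintro ⟨n, m⟩ h; rfl

lemma sum_one_div_sqrt (N : ℕ) :
    ∑ n ∈ Finset.Icc 1 N, 1 / Real.sqrt n ≤ 2 * Real.sqrt N := by
  induction N with
  | zero => simp
  | succ N ih =>
    rw [Finset.sum_Icc_succ_top (by omega : 1 ≤ N + 1)]
    have ha : (0:ℝ) ≤ Real.sqrt N := Real.sqrt_nonneg _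
    have hb : (0:ℝ) < Real.sqrt (N+1) := Real.sqrt_pos.mpr (by positivity)
    have ha2 : Real.sqrt N ^ 2 = (N:ℝ) := Real.sq_sqrt (by positivity)
    have hb2 : Real.sqrt (N+1) ^ 2 = (N:ℝ)+1 := by
      rw [Real.sq_sqrt (by positivity)]
    have key : 1 / Real.sqrt (N+1) ≤ 2 * Real.sqrt (N+1) - 2 * Real.sqrt N := by
      rw [div_le_iff₀ hb]
      nlinarith [sq_nonneg (Real.sqrt (N+1) - Real.sqrt N)]
    have : ((N+1 : ℕ) : ℝ) = (N:ℝ)+1 := by push_cast; ring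
    rw [this]
    linarith
  
lemma log_sq_le' {t : ℝ} (ht : 1 ≤ t) : (Real.log t)^2 ≤ 16 * Real.sqrt t := by
  have ht0 : (0:ℝ) < t := lt_of_lt_of_le zero_lt_one ht
  have h1 : Real.log t = 4 * Real.log (Real.sqrt (Real.sqrt t)) := by
    rw [Real.log_sqrt (Real.sqrt_nonneg t), Real.log_sqrt ht0.le]; ring
  have h2 : (0:ℝ) < Real.sqrt (Real.sqrt t) := Real.sqrt_pos.mpr (Real.sqrt_pos.mpr ht0)
  have h3 : Real.log (Real.sqrt (Real.sqrt t)) ≤ Real.sqrt (Real.sqrt t) :=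
    le_trans (Real.log_le_sub_one_of_pos h2) (by linarith)
  have hs1 : (1:ℝ) ≤ Real.sqrt t := by
    rw [show (1:ℝ) = Real.sqrt 1 by simp]
    exact Real.sqrt_le_sqrt ht
  have hs2 : (1:ℝ) ≤ Real.sqrt (Real.sqrt t) := by
    rw [show (1:ℝ) = Real.sqrt 1 by simp]
    exact Real.sqrt_le_sqrt hs1
  have h4 : (0:ℝ) ≤ Real.log (Real.sqrt (Real.sqrt t)) := Real.log_nonneg hs2
  have h5 : (Real.log (Real.sqrt (Real.sqrt t)))^2 ≤ (Real.sqrt (Real.sqrt t))^2 := by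
    apply sq_le_sq' <;> nlinarith
  have h6 : (Real.sqrt (Real.sqrt t))^2 = Real.sqrt t := Real.sq_sqrt (Real.sqrt_nonneg t)
  rw [h1]
  nlinarith

lemma AF_sub_apply (f g : ArithmeticFunction ℝ) (n : ℕ) : (f - g) n = f n - g n := by
  rw [sub_eq_add_neg, ArithmeticFunction.add_apply, sub_eq_add_neg]
  rfl

theorem F_log_sq_eq
    (F : ℝ → ℝ)
    (hF : ∀ x, F x = ∑ n ∈ Finset.Icc 1 ⌊x⌋₊, (μ n : ℝ) * Real.log (x / n))
    (Λ₂m : ℕ → ℝ)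
    (hΛ₂m : ∀ n, Λ₂m n = (∑ d ∈ n.divisors, Λ d * Λ (n / d)) - Λ n * Real.log n) :
    (fun x : ℝ =>
        F x * (Real.log x)^2 - ∑ n ∈ Finset.Icc 1 ⌊x⌋₊, Λ₂m n * F (x / n))
      =O[atTop] (fun x : ℝ => x * Real.log x) := by
  have hΛ₂m' : ∀ n, Λ₂m n = (Λ * Λ - ArithmeticFunction.log.pmul Λ) n := by
    intro n
    rw [hΛ₂m, AF_sub_apply, mul_apply, Nat.sum_divisorsAntidiagonal (fun a b => Λ a * Λ b),
      pmul_apply, log_apply]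
    ring
  rw [isBigO_iff]
  refine ⟨64, ?_⟩
  filter_upwards [eventually_ge_atTop (1:ℝ)] with x hx
  have hx0 : (0:ℝ) < x := lt_of_lt_of_le zero_lt_one hx
  set N := ⌊x⌋₊ with hN
  have hNx : (N : ℝ) ≤ x := Nat.floor_le hx0.le
  -- the members of Icc 1 N are positive and at most x
  have hmem : ∀ n ∈ Finset.Icc 1 N, (1:ℝ) ≤ (n:ℝ) ∧ (n:ℝ) ≤ x := by
    intro n hn
    rw [Finset.mem_Icc] at hn
    exact ⟨by exact_mod_cast hn.1, le_trans (by exact_mod_cast hn.2) hNx⟩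
  -- Step A
  have hstepA : ∑ n ∈ Finset.Icc 1 N, Λ₂m n * F (x / n)
      = ∑ k ∈ Finset.Icc 1 N, ((μ k : ℝ) * (Real.log k)^2) * Real.log (x / k) := by
    calc ∑ n ∈ Finset.Icc 1 N, Λ₂m n * F (x / n)
        = ∑ n ∈ Finset.Icc 1 N, ∑ m ∈ Finset.Icc 1 (N / n),
            Λ₂m n * ((μ m : ℝ) * Real.log (x / (n*m))) := by
          refine Finset.sum_congr rfl fun n hn => ?_
          rw [hF (x / n), Nat.floor_div_natCast, Finset.mul_sum]
          refine Finset.sum_congr rfl fun m hm => ?_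
          rw [div_div]
      _ = ∑ k ∈ Finset.Icc 1 N, ∑ p ∈ k.divisorsAntidiagonal,
            Λ₂m p.1 * ((μ p.2 : ℝ) * Real.log (x / (p.1*p.2))) :=
          sum_swap_div N _
      _ = ∑ k ∈ Finset.Icc 1 N, ((μ k : ℝ) * (Real.log k)^2) * Real.log (x / k) := by
          refine Finset.sum_congr rfl fun k hk => ?_
          have hinner : ∀ p ∈ k.divisorsAntidiagonal,
              Λ₂m p.1 * ((μ p.2 : ℝ) * Real.log (x / (p.1*p.2)))
                = (Λ₂m p.1 * (μ p.2 : ℝ)) * Real.log (x / k) := by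
            intro p hp
            obtain ⟨hpk, -⟩ := Nat.mem_divisorsAntidiagonal.mp hp
            rw [show ((p.1:ℝ) * p.2) = (k:ℝ) by exact_mod_cast hpk]; ring
          rw [Finset.sum_congr rfl hinner, ← Finset.sum_mul]
          congr 1
          have h : ((Λ * Λ - ArithmeticFunction.log.pmul Λ) * (μ : ArithmeticFunction ℝ)) k
              = (ArithmeticFunction.log.pmul
                  (ArithmeticFunction.log.pmul (μ : ArithmeticFunction ℝ))) k := by
            rw [key_af']
          rw [mul_apply] at h
          have hL : ∑ p ∈ k.divisorsAntidiagonal, Λ₂m p.1 * (μ p.2 : ℝ)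
              = ∑ p ∈ k.divisorsAntidiagonal,
                  (Λ * Λ - ArithmeticFunction.log.pmul Λ) p.1 * (μ : ArithmeticFunction ℝ) p.2 := by
            refine Finset.sum_congr rfl fun p hp => ?_
            rw [← hΛ₂m' p.1, intCoe_apply]
          rw [hL, h, pmul_apply, pmul_apply, log_apply, intCoe_apply]
          push_cast
          ring
  -- Step B
  have hstepB : F x * (Real.log x)^2 - ∑ n ∈ Finset.Icc 1 N, Λ₂m n * F (x / n)
      = ∑ n ∈ Finset.Icc 1 N, (μ n : ℝ) * (Real.log (x/n))^2 * (Real.log x + Real.log n) := by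
    have hFx : F x * (Real.log x)^2
        = ∑ n ∈ Finset.Icc 1 N, ((μ n : ℝ) * Real.log (x/n)) * (Real.log x)^2 := by
      rw [hF x, Finset.sum_mul]
    rw [hFx, hstepA, ← Finset.sum_sub_distrib]
    refine Finset.sum_congr rfl fun n hn => ?_
    obtain ⟨h1n, hnx⟩ := hmem n hn
    have hn0 : (0:ℝ) < n := lt_of_lt_of_le zero_lt_one h1n
    have hlog : Real.log (x/n) = Real.log x - Real.log n := Real.log_div hx0.ne' hn0.ne'
    rw [hlog]; ring
  -- Bound
  have hlogx : (0:ℝ) ≤ Real.log x := Real.log_nonneg hx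
  have habs : ∀ n ∈ Finset.Icc 1 N,
      |(μ n : ℝ) * (Real.log (x/n))^2 * (Real.log x + Real.log n)|
        ≤ (32 * Real.log x * Real.sqrt x) * (1 / Real.sqrt n) := by
    intro n hn
    obtain ⟨h1n, hnx⟩ := hmem n hn
    have hn0 : (0:ℝ) < n := lt_of_lt_of_le zero_lt_one h1n
    have hxn1 : (1:ℝ) ≤ x / n := (one_le_div hn0).mpr hnx
    have hlogn0 : (0:ℝ) ≤ Real.log n := Real.log_nonneg h1n
    have hlognx : Real.log n ≤ Real.log x := Real.log_le_log hn0 hnx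
    have hμ : |(μ n : ℝ)| ≤ 1 := by
      have := @ArithmeticFunction.abs_moebius_le_one n
      exact_mod_cast this
    have hsq : (Real.log (x/n))^2 ≤ 16 * Real.sqrt (x/n) := log_sq_le' hxn1
    rw [abs_mul, abs_mul, abs_of_nonneg (sq_nonneg (Real.log (x/n))),
      abs_of_nonneg (by linarith : (0:ℝ) ≤ Real.log x + Real.log n)]
    have hs : (0:ℝ) ≤ Real.sqrt (x/n) := Real.sqrt_nonneg _
    have step1 : |(μ n : ℝ)| * (Real.log (x/n))^2 ≤ 1 * (16 * Real.sqrt (x/n)) :=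
      mul_le_mul hμ hsq (sq_nonneg _) zero_le_one
    have step2 : |(μ n : ℝ)| * (Real.log (x/n))^2 * (Real.log x + Real.log n)
        ≤ 1 * (16 * Real.sqrt (x/n)) * (2 * Real.log x) :=
      mul_le_mul step1 (by linarith) (by linarith) (by positivity)
    have hsqrtdiv : Real.sqrt (x/n) = Real.sqrt x * (1 / Real.sqrt n) := by
      rw [Real.sqrt_div hx0.le]; ring
    calc |(μ n : ℝ)| * (Real.log (x/n))^2 * (Real.log x + Real.log n)
        ≤ 1 * (16 * Real.sqrt (x/n)) * (2 * Real.log x) := step2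
      _ = (32 * Real.log x * Real.sqrt x) * (1 / Real.sqrt n) := by
          rw [hsqrtdiv]; ring
  have hxlog0 : (0:ℝ) ≤ x * Real.log x := by positivity
  rw [Real.norm_eq_abs, Real.norm_eq_abs, abs_of_nonneg hxlog0, hstepB]
  have hsqrtN : Real.sqrt N ≤ Real.sqrt x := Real.sqrt_le_sqrt hNx
  have hsx : Real.sqrt x * Real.sqrt x = x := Real.mul_self_sqrt hx0.le
  have hsx0 : (0:ℝ) ≤ Real.sqrt x := Real.sqrt_nonneg x
  calc |∑ n ∈ Finset.Icc 1 N, (μ n : ℝ) * (Real.log (x/n))^2 * (Real.log x + Real.log n)|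
      ≤ ∑ n ∈ Finset.Icc 1 N,
          |(μ n : ℝ) * (Real.log (x/n))^2 * (Real.log x + Real.log n)| :=
        Finset.abs_sum_le_sum_abs _ _
    _ ≤ ∑ n ∈ Finset.Icc 1 N, (32 * Real.log x * Real.sqrt x) * (1 / Real.sqrt n) :=
        Finset.sum_le_sum habs
    _ = (32 * Real.log x * Real.sqrt x) * ∑ n ∈ Finset.Icc 1 N, 1 / Real.sqrt n := by
        rw [Finset.mul_sum]
    _ ≤ (32 * Real.log x * Real.sqrt x) * (2 * Real.sqrt N) :=
        mul_le_mul_of_nonneg_left (sum_one_div_sqrt N) (by positivity)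
    _ ≤ 64 * (x * Real.log x) := by
        have h1 : Real.sqrt x * Real.sqrt N ≤ Real.sqrt x * Real.sqrt x :=
          mul_le_mul_of_nonneg_left hsqrtN hsx0
        rw [hsx] at h1
        nlinarith [h1, hlogx]
end

section
/- If ∫₁^x M(y)/y dy = o(x) as x → ∞, then M(x) = o(x), i.e., lim_{x→∞} M(x)/x = 0. -/
open Finset ArithmeticFunction Filter
open scoped ArithmeticFunction.Moebius

open MeasureTheory intervalIntegral

theorem mertens_from_log_average
    (M : ℝ → ℝ)
    (hM : ∀ y, M y = ∑ n ∈ Finset.Icc 1 ⌊y⌋₊, (μ n : ℝ))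
    (hlog : Tendsto (fun x : ℝ => (∫ y in (1:ℝ)..x, M y / y) / x) atTop (nhds 0)) :
    Tendsto (fun x : ℝ => M x / x) atTop (nhds 0) := by
  set F : ℝ → ℝ := fun x => ∫ y in (1:ℝ)..x, M y / y with hFdef
  -- basic bounds on M
  have habs : ∀ n : ℕ, |(μ n : ℝ)| ≤ 1 := by
    intro n
    have := ArithmeticFunction.abs_moebius_le_one (n := n)
    exact_mod_cast (by exact_mod_cast this : |((μ n : ℤ) : ℝ)| ≤ 1)
  have hb : ∀ y : ℝ, 0 ≤ y → |M y| ≤ y := by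
    intro y hy
    rw [hM]
    calc |∑ n ∈ Finset.Icc 1 ⌊y⌋₊, (μ n : ℝ)| ≤ ∑ n ∈ Finset.Icc 1 ⌊y⌋₊, |(μ n : ℝ)| :=
          Finset.abs_sum_le_sum_abs _ _
      _ ≤ ∑ n ∈ Finset.Icc 1 ⌊y⌋₊, 1 := Finset.sum_le_sum fun n _ => habs n
      _ = (⌊y⌋₊ : ℝ) := by simp [Nat.card_Icc]
      _ ≤ y := Nat.floor_le hy
  have hstep : ∀ x y : ℝ, 0 ≤ x → x ≤ y → |M y - M x| ≤ y - x + 1 := by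
    intro x y hx hxy
    have hf : ⌊x⌋₊ ≤ ⌊y⌋₊ := Nat.floor_le_floor hxy
    have hIcc : ∀ n : ℕ, Finset.Icc 1 n = Finset.Ioc 0 n := by
      intro n; rw [← Finset.Icc_add_one_left_eq_Ioc, zero_add]
    have hsplit : ∑ n ∈ Finset.Ioc 0 ⌊x⌋₊, (μ n : ℝ) + ∑ n ∈ Finset.Ioc ⌊x⌋₊ ⌊y⌋₊, (μ n : ℝ)
        = ∑ n ∈ Finset.Ioc 0 ⌊y⌋₊, (μ n : ℝ) :=
      Finset.sum_Ioc_consecutive _ (Nat.zero_le _) hf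
    have heq : M y - M x = ∑ n ∈ Finset.Ioc ⌊x⌋₊ ⌊y⌋₊, (μ n : ℝ) := by
      rw [hM, hM, hIcc, hIcc, ← hsplit]; ring
    rw [heq]
    calc |∑ n ∈ Finset.Ioc ⌊x⌋₊ ⌊y⌋₊, (μ n : ℝ)| ≤ ∑ n ∈ Finset.Ioc ⌊x⌋₊ ⌊y⌋₊, |(μ n : ℝ)| :=
          Finset.abs_sum_le_sum_abs _ _
      _ ≤ ∑ n ∈ Finset.Ioc ⌊x⌋₊ ⌊y⌋₊, 1 := Finset.sum_le_sum fun n _ => habs n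
      _ = ((⌊y⌋₊ - ⌊x⌋₊ : ℕ) : ℝ) := by simp [Nat.card_Ioc]
      _ ≤ y - x + 1 := by
          rw [Nat.cast_sub hf]
          have h1 : (⌊y⌋₊ : ℝ) ≤ y := Nat.floor_le (hx.trans hxy)
          have h2 : x - 1 ≤ (⌊x⌋₊ : ℝ) := by
            have := Nat.sub_one_lt_floor x
            linarith
          linarith
  -- measurability and integrability
  have hmeas : Measurable M := by
    have hMe : M = (fun n : ℕ => ∑ k ∈ Finset.Icc 1 n, (μ k : ℝ)) ∘ (Nat.floor : ℝ → ℕ) :=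
      funext hM
    rw [hMe]
    exact measurable_from_nat.comp Nat.measurable_floor
  have hint : ∀ a b : ℝ, 1 ≤ a → 1 ≤ b → IntervalIntegrable (fun y => M y / y) volume a b := by
    intro a b ha hb'
    apply IntervalIntegrable.mono_fun (_root_.intervalIntegrable_const (c := (1:ℝ)))
    · exact ((hmeas.div measurable_id).aestronglyMeasurable).restrict
    · filter_upwards [ae_restrict_mem measurableSet_uIoc] with y hy
      have hy1 : 1 ≤ y := by
        rcases hy with ⟨h1, _⟩
        have : (1:ℝ) ≤ min a b := le_min ha hb'
        linarith
      have hy0 : 0 < y := lt_of_lt_of_le one_pos hy1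
      simp only [norm_div, Real.norm_eq_abs, norm_one]
      rw [abs_of_pos hy0, div_le_one hy0]
      exact hb y hy0.le
  -- the key estimate
  have key : ∀ x h : ℝ, 1 ≤ x → 0 < h →
      |M x| * (h / (x + h)) ≤ |F (x+h)| + |F x| + (h+1) / x * h := by
    intro x h hx hh
    have hx0 : (0:ℝ) < x := lt_of_lt_of_le one_pos hx
    have hxh : (1:ℝ) ≤ x + h := by linarith
    have hmem : (0:ℝ) ∉ Set.uIcc x (x+h) := by
      rw [Set.mem_uIcc]; push_neg
      constructor <;> intro h' <;> linarith
    have hne : ∀ y : ℝ, y ∈ Set.uIcc x (x+h) → y ≠ 0 := fun y hy hy0 => hmem (hy0 ▸ hy)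
    have hinv : IntervalIntegrable (fun y : ℝ => M x * y⁻¹) volume x (x+h) :=
      (intervalIntegrable_inv hne continuousOn_id).const_mul _
    have hsum : F (x+h) - F x = ∫ y in x..(x+h), M y / y := by
      show (∫ y in (1:ℝ)..(x+h), M y / y) - (∫ y in (1:ℝ)..x, M y / y) = _
      rw [← integral_add_adjacent_intervals (hint 1 x le_rfl hx) (hint x (x+h) hx hxh)]
      ring
    have hconst : (∫ y in x..(x+h), M x * y⁻¹) = M x * Real.log ((x+h)/x) := by
      rw [intervalIntegral.integral_const_mul, integral_inv hmem]
    have hfeq : (fun y : ℝ => M y / y) = fun y => (M y - M x) / y + M x * y⁻¹ := by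
      funext y
      rw [← div_eq_mul_inv, ← add_div, sub_add_cancel]
    have hdiffeq : (fun y : ℝ => (M y - M x) / y) = fun y => M y / y - M x * y⁻¹ := by
      funext y
      rw [← div_eq_mul_inv, sub_div]
    have hdiffint : IntervalIntegrable (fun y : ℝ => (M y - M x) / y) volume x (x+h) := by
      rw [hdiffeq]; exact (hint x (x+h) hx hxh).sub hinv
    have hsplit : (∫ y in x..(x+h), M y / y)
        = (∫ y in x..(x+h), (M y - M x) / y) + M x * Real.log ((x+h)/x) := by
      rw [hfeq, integral_add hdiffint hinv, hconst]
    have hbound : |∫ y in x..(x+h), (M y - M x) / y| ≤ (h+1)/x * h := by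
      have hnb := norm_integral_le_of_norm_le_const (C := (h+1)/x) (a := x) (b := x+h)
        (f := fun y => (M y - M x) / y) (fun y hy => by
          rw [Set.uIoc_of_le (by linarith : x ≤ x + h)] at hy
          obtain ⟨hy1, hy2⟩ := hy
          have hy0 : 0 < y := lt_trans hx0 hy1
          have h1 : |M y - M x| ≤ h + 1 := by
            have := hstep x y hx0.le hy1.le
            linarith
          rw [Real.norm_eq_abs, abs_div, abs_of_pos hy0]
          exact div_le_div₀ (by linarith) h1 hx0 (by linarith))
      rw [Real.norm_eq_abs] at hnb
      calc |∫ y in x..(x+h), (M y - M x) / y| ≤ (h+1)/x * |x + h - x| := hnb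
        _ = (h+1)/x * h := by rw [show x + h - x = h by ring, abs_of_pos hh]
    have hlogge : h/(x+h) ≤ Real.log ((x+h)/x) := by
      have h1 : (0:ℝ) < x/(x+h) := by positivity
      have h2 := Real.log_le_sub_one_of_pos h1
      have h3 : Real.log ((x+h)/x) = - Real.log (x/(x+h)) := by
        rw [← Real.log_inv, inv_div]
      have h4 : 1 - x/(x+h) = h/(x+h) := by field_simp; ring
      linarith
    have hlognn : 0 ≤ Real.log ((x+h)/x) := Real.log_nonneg (by
      rw [le_div_iff₀ hx0]; linarith)
    calc |M x| * (h/(x+h)) ≤ |M x| * Real.log ((x+h)/x) :=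
          mul_le_mul_of_nonneg_left hlogge (abs_nonneg _)
      _ = |M x * Real.log ((x+h)/x)| := by rw [abs_mul, abs_of_nonneg hlognn]
      _ = |(F (x+h) - F x) - ∫ y in x..(x+h), (M y - M x) / y| := by
          rw [hsum, hsplit, add_sub_cancel_left]
      _ ≤ |F (x+h) - F x| + |∫ y in x..(x+h), (M y - M x) / y| := abs_sub _ _
      _ ≤ (|F (x+h)| + |F x|) + (h+1)/x * h := add_le_add (abs_sub _ _) hbound
      _ = |F (x+h)| + |F x| + (h+1)/x * h := by ring
  -- final assembly
  rw [Metric.tendsto_atTop] at hlog ⊢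
  intro ε hε
  set δ : ℝ := min (ε/8) 1 with hδdef
  have hδ0 : 0 < δ := lt_min (by linarith) one_pos
  have hδ1 : δ ≤ 1 := min_le_right _ _
  have hδε : δ ≤ ε/8 := min_le_left _ _
  set ε' : ℝ := ε * δ / 24 with hε'def
  have hε'0 : 0 < ε' := by positivity
  obtain ⟨N, hN⟩ := hlog ε' hε'0
  refine ⟨max (max N 1) (8/ε), fun x hx => ?_⟩
  have hx1 : (1:ℝ) ≤ x := le_trans (le_max_of_le_left (le_max_right _ _)) hx
  have hxN : N ≤ x := le_trans (le_max_of_le_left (le_max_left _ _)) hx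
  have hx8 : 8/ε ≤ x := le_trans (le_max_right _ _) hx
  have hx0 : (0:ℝ) < x := lt_of_lt_of_le one_pos hx1
  have hεx : 8 ≤ ε * x := by
    rw [div_le_iff₀ hε] at hx8
    linarith [hx8]
  set h : ℝ := δ * x with hhdef
  have hh0 : 0 < h := mul_pos hδ0 hx0
  -- F bounds
  have hFx : |F x| < ε' * x := by
    have := hN x hxN
    rw [Real.dist_eq, sub_zero, abs_div, abs_of_pos hx0, div_lt_iff₀ hx0] at this
    linarith [this]
  have hFxh : |F (x + h)| < ε' * (x + h) := by
    have hxh0 : 0 < x + h := by linarith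
    have := hN (x + h) (by linarith)
    rw [Real.dist_eq, sub_zero, abs_div, abs_of_pos hxh0, div_lt_iff₀ hxh0] at this
    linarith [this]
  have hkey := key x h hx1 hh0
  -- simplify the ratio
  have hfrac : h / (x + h) = δ / (1 + δ) := by
    rw [hhdef]
    rw [show x + δ * x = (1 + δ) * x by ring]
    rw [div_eq_div_iff (by positivity) (by positivity)]
    ring
  have herr : (h + 1) / x * h = δ * δ * x + δ := by
    rw [hhdef]
    field_simp
  rw [hfrac, herr] at hkey
  have hS : |M x| * (δ / (1 + δ)) < ε' * (x + h) + ε' * x + (δ * δ * x + δ) := by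
    linarith
  have h1p : (0:ℝ) < 1 + δ := by linarith
  have hMδ : |M x| * δ < (ε' * (x + h) + ε' * x + (δ * δ * x + δ)) * (1 + δ) := by
    have hm := mul_lt_mul_of_pos_right hS h1p
    have e : |M x| * (δ / (1 + δ)) * (1 + δ) = |M x| * δ := by field_simp
    linarith
  have hSe : (ε' * (x + h) + ε' * x + (δ * δ * x + δ)) * (1 + δ)
      = ε * δ / 24 * ((2 + δ) * x) * (1 + δ) + δ * δ * x * (1 + δ) + δ * (1 + δ) := by
    rw [hε'def, hhdef]; ring
  have c1 : (2 + δ) * (1 + δ) ≤ 6 := by nlinarith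
  have b1 : ε * δ / 24 * ((2 + δ) * x) * (1 + δ) ≤ ε * δ * x / 4 := by
    calc ε * δ / 24 * ((2 + δ) * x) * (1 + δ) = (ε * δ * x / 24) * ((2 + δ) * (1 + δ)) := by
          ring
      _ ≤ (ε * δ * x / 24) * 6 := mul_le_mul_of_nonneg_left c1 (by positivity)
      _ = ε * δ * x / 4 := by ring
  have b2 : δ * δ * x * (1 + δ) ≤ ε * δ * x / 4 := by
    calc δ * δ * x * (1 + δ) ≤ δ * δ * x * 2 :=
          mul_le_mul_of_nonneg_left (by linarith) (by positivity)
      _ = (2 * δ) * (δ * x) := by ring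
      _ ≤ (2 * (ε/8)) * (δ * x) :=
          mul_le_mul_of_nonneg_right (by linarith) (by positivity)
      _ = ε * δ * x / 4 := by ring
  have b3 : δ * (1 + δ) ≤ ε * δ * x / 4 := by
    calc δ * (1 + δ) ≤ δ * 2 := mul_le_mul_of_nonneg_left (by linarith) hδ0.le
      _ ≤ δ * (ε * x / 4) := mul_le_mul_of_nonneg_left (by linarith) hδ0.le
      _ = ε * δ * x / 4 := by ring
  have hfinal : |M x| * δ < (ε * x) * δ := by
    have hpos : (0:ℝ) < ε * δ * x := by positivity
    have hrg : ε * δ * x = ε * x * δ := by ring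
    rw [hSe] at hMδ
    linarith
  have hgoal : |M x| < ε * x := lt_of_mul_lt_mul_right hfinal hδ0.le
  rw [Real.dist_eq, sub_zero, abs_div, abs_of_pos hx0, div_lt_iff₀ hx0]
  exact hgoal
end
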